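/- Let G=(V,E) be a finite undirected graph with minimum degree at least 2 that contains no semi-disjoint cycles. Then for every (inclusion-wise) minimal feedback vertex set F of G, Σ_{v∈F}(d(v) − 1) ≤ 2(|E| − |V|), where d(v) denotes the degree of v in G. -/

import Mathlib

/- Common definitions for the polyhedral study of FVS / PFDS. -/

open scoped Classical
open Finset

namespace FVS

noncomputable section

variable {V : Type*}

/-- Degree of `u` in the subgraph of `G` induced on the vertex set `S`. -/
def degIn [Fintype V] (G : SimpleGraph V) (S : Finset V) (u : V) : ℕ :=
  (S.filter fun v => G.Adj u v).card

/-- Number of edges of `G` with both endpoints in `S`, i.e. `|E[S]|`. -/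
def edgesIn [Fintype V] (G : SimpleGraph V) (S : Finset V) : ℕ :=
  (G.edgeFinset.filter fun e => ∀ v ∈ e, v ∈ S).card

/-- A finite graph is a pseudoforest if each connected component has at most as many
edges as vertices. -/
def IsPseudoforest {W : Type*} [Fintype W] (H : SimpleGraph W) : Prop :=
  ∀ C : H.ConnectedComponent,
    (H.edgeFinset.filter fun e => ∀ v ∈ e, H.connectedComponentMk v = C).card ≤
      (Finset.univ.filter fun v => H.connectedComponentMk v = C).card

/-- `U` is a pseudoforest deletion set for `G`: `G - U` is a pseudoforest. -/
def IsPFDS [Fintype V] (G : SimpleGraph V) (U : Finset V) : Prop :=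
  IsPseudoforest (G.induce {v : V | v ∉ U})

/-- `F` is a feedback vertex set for `G`: `G - F` is acyclic. -/
def IsFVS [Fintype V] (G : SimpleGraph V) (F : Finset V) : Prop :=
  (G.induce {v : V | v ∉ F}).IsAcyclic

/-- Membership in the orientation polyhedron `P_orient(G)`: for every edge `e = uv`,
`x_u + x_v + y_{e,u} + y_{e,v} ≥ 1`; for every vertex `u`,
`x_u + Σ_{e ∈ δ(u)} y_{e,u} ≤ 1`; and all variables are nonnegative.  The variables
`y e u` for pairs `(e, u)` where `e` is not an edge of `G` or `u` is not an endpoint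
of `e` do not occur in the formulation and are pinned to `0`. -/
def POrient [Fintype V] (G : SimpleGraph V) (x : V → ℝ) (y : Sym2 V → V → ℝ) : Prop :=
  (∀ u v, G.Adj u v → 1 ≤ x u + x v + y s(u, v) u + y s(u, v) v) ∧
  (∀ u, x u + ∑ e ∈ G.edgeFinset.filter (fun e => u ∈ e), y e u ≤ 1) ∧
  (∀ u, 0 ≤ x u) ∧
  (∀ e u, 0 ≤ y e u) ∧
  (∀ e u, ¬ (e ∈ G.edgeSet ∧ u ∈ e) → y e u = 0)

/-- Membership in `Q_orient(G)`, the projection of `P_orient(G)` to the `x`-variables. -/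
def QOrient [Fintype V] (G : SimpleGraph V) (x : V → ℝ) : Prop :=
  ∃ y : Sym2 V → V → ℝ, POrient G x y

/-- Membership in the weak density polyhedron `P_WD(G)`:
`x ≥ 0` and `Σ_{u ∈ S} (d_S(u) - 1) x_u ≥ |E[S]| - |S|` for every `S ⊆ V`. -/
def PWD [Fintype V] (G : SimpleGraph V) (x : V → ℝ) : Prop :=
  (∀ u, 0 ≤ x u) ∧
  ∀ S : Finset V, (edgesIn G S : ℝ) - S.card ≤ ∑ u ∈ S, ((degIn G S u : ℝ) - 1) * x u

/-- Membership in the strong density polyhedron `P_SD(G)`: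
`x ≥ 0` and `Σ_{u ∈ S} (d_S(u) - 1) x_u ≥ |E[S]| - |S| + 1` whenever `E[S] ≠ ∅`. -/
def PSD [Fintype V] (G : SimpleGraph V) (x : V → ℝ) : Prop :=
  (∀ u, 0 ≤ x u) ∧
  ∀ S : Finset V, edgesIn G S ≠ 0 →
    (edgesIn G S : ℝ) - S.card + 1 ≤ ∑ u ∈ S, ((degIn G S u : ℝ) - 1) * x u

/-- The induced subgraph `G[U]` is a cycle: it is connected and `2`-regular. -/
def IsInducedCycle [Fintype V] (G : SimpleGraph V) (U : Finset V) : Prop :=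
  (G.induce (U : Set V)).Connected ∧ ∀ u ∈ U, degIn G U u = 2

/-- Membership in the cycle cover polyhedron `P_cycle-cover(G)`. -/
def PCycleCover [Fintype V] (G : SimpleGraph V) (x : V → ℝ) : Prop :=
  (∀ u, 0 ≤ x u) ∧ ∀ U : Finset V, IsInducedCycle G U → 1 ≤ ∑ u ∈ U, x u

/-- The induced subgraph `G[U]` is a `2`-pseudotree: connected with at least `|U| + 1` edges. -/
def Is2PseudotreeInduced [Fintype V] (G : SimpleGraph V) (U : Finset V) : Prop :=
  (G.induce (U : Set V)).Connected ∧ U.card + 1 ≤ edgesIn G U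

/-- Membership in the `2`-pseudotree cover polyhedron `P_2PT-cover(G)`. -/
def P2PTCover [Fintype V] (G : SimpleGraph V) (x : V → ℝ) : Prop :=
  (∀ u, 0 ≤ x u) ∧ ∀ U : Finset V, Is2PseudotreeInduced G U → 1 ≤ ∑ u ∈ U, x u

/-- `(x, y)` is an extreme point of `P_orient(G)`: it is feasible and is not a proper
convex combination of two distinct points of `P_orient(G)`. -/
def POrientExtreme [Fintype V] (G : SimpleGraph V) (x : V → ℝ) (y : Sym2 V → V → ℝ) : Prop :=
  POrient G x y ∧
    ∀ (x₁ x₂ : V → ℝ) (y₁ y₂ : Sym2 V → V → ℝ) (t : ℝ),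
      POrient G x₁ y₁ → POrient G x₂ y₂ → 0 < t → t < 1 →
      (∀ v, x v = t * x₁ v + (1 - t) * x₂ v) →
      (∀ e u, y e u = t * y₁ e u + (1 - t) * y₂ e u) →
      x₁ = x₂ ∧ y₁ = y₂

/-- `(x, y)` is a minimal point of `P_orient(G)`: decreasing any single coordinate by
any `ε > 0`, keeping the other coordinates unchanged, yields a point outside the
polyhedron. -/
def POrientMinimal [Fintype V] (G : SimpleGraph V) (x : V → ℝ) (y : Sym2 V → V → ℝ) : Prop :=
  (∀ v, ∀ ε : ℝ, 0 < ε → ¬ POrient G (Function.update x v (x v - ε)) y) ∧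
  (∀ e u, ∀ ε : ℝ, 0 < ε →
    ¬ POrient G x (fun e' u' => if e' = e ∧ u' = u then y e u - ε else y e' u'))

/-- `x` is an extreme point of `P_WD(G)`: it is feasible and is not a proper convex
combination of two distinct points of `P_WD(G)`. -/
def PWDExtreme [Fintype V] (G : SimpleGraph V) (x : V → ℝ) : Prop :=
  PWD G x ∧
    ∀ (x₁ x₂ : V → ℝ) (t : ℝ), PWD G x₁ → PWD G x₂ → 0 < t → t < 1 →
      (∀ v, x v = t * x₁ v + (1 - t) * x₂ v) → x₁ = x₂

/-- The support graph `H(y)`: the bipartite graph on `V(G) ⊕ E(G)` joining a vertex `v`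
to an edge `e` whenever `v` is an endpoint of the edge `e` of `G` and `y e v > 0`. -/
def supportGraph [Fintype V] (G : SimpleGraph V) (y : Sym2 V → V → ℝ) :
    SimpleGraph (V ⊕ Sym2 V) :=
  SimpleGraph.fromRel fun a b =>
    ∃ v e, a = Sum.inl v ∧ b = Sum.inr e ∧ e ∈ G.edgeSet ∧ v ∈ e ∧ 0 < y e v

/-- The edge `e` lies on some cycle of `G`. -/
def OnCycle (G : SimpleGraph V) (e : Sym2 V) : Prop :=
  ∃ (u : V) (w : G.Walk u u), w.IsCycle ∧ e ∈ w.edges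

/-- `G` has a semi-disjoint cycle: a cycle containing at most one vertex whose degree
in `G` is strictly larger than `2`. -/
def HasSemiDisjointCycle [Fintype V] (G : SimpleGraph V) : Prop :=
  ∃ (u : V) (w : G.Walk u u), w.IsCycle ∧
    (w.support.toFinset.filter fun v => 2 < G.degree v).card ≤ 1

/-- The set `δ(F, V - F)` of edges of `G` with exactly one endpoint in `F`. -/
def cutEdges [Fintype V] (G : SimpleGraph V) (F : Finset V) : Finset (Sym2 V) :=
  G.edgeFinset.filter fun e => ∃ u v, e = s(u, v) ∧ u ∈ F ∧ v ∉ F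

/-- The function `f_x(S) = |E[S]| - |S| - Σ_{u ∈ S} (d_S(u) - 1) x_u`. -/
def fWD [Fintype V] (G : SimpleGraph V) (x : V → ℝ) (S : Finset V) : ℝ :=
  (edgesIn G S : ℝ) - S.card - ∑ u ∈ S, ((degIn G S u : ℝ) - 1) * x u

/-- The row vector `row(S)` of the weak density constraint for the set `S`:
its coordinate at `u` is `d_S(u) - 1` if `u ∈ S` and `0` otherwise. -/
def rowWD [Fintype V] (G : SimpleGraph V) (S : Finset V) (u : V) : ℝ :=
  if u ∈ S then (degIn G S u : ℝ) - 1 else 0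

/-- The constraints (orientation), (load), (cumulative) and nonnegativity of the
purely orientation-based ILP formulation for FVS, with one copy `y f` of the
orientation variables for each edge `f` of `G`:
* `x_v + x_w + y^f_{e,v} + y^f_{e,w} ≥ 1` for all edges `e = vw` and all `f ∈ E`;
* `x_v + Σ_{e = vw ∈ E} y^f_{e,w} ≥ 1` for all `v ∈ V` and all `f ∈ E`;
* `Σ_{v ∈ V - {a,b}} x_v + Σ_{e = vw ∈ E - {f}} (y^f_{e,w} + y^f_{e,v}) ≤ |V| - 2`
  for all `f = ab ∈ E`; and all variables nonnegative. -/
def OrientSD [Fintype V] (G : SimpleGraph V) (x : V → ℝ)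
    (y : Sym2 V → Sym2 V → V → ℝ) : Prop :=
  (∀ f ∈ G.edgeSet, ∀ v w, G.Adj v w →
    1 ≤ x v + x w + y f s(v, w) v + y f s(v, w) w) ∧
  (∀ f ∈ G.edgeSet, ∀ v : V, 1 ≤ x v + ∑ w ∈ G.neighborFinset v, y f s(v, w) w) ∧
  (∀ a b : V, G.Adj a b →
    (∑ v ∈ Finset.univ \ {a, b}, x v) +
      (∑ e ∈ G.edgeFinset.erase s(a, b),
        ∑ u ∈ Finset.univ.filter (fun u => u ∈ e), y s(a, b) e u)
      ≤ (Fintype.card V : ℝ) - 2) ∧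
  (∀ u, 0 ≤ x u) ∧ (∀ f e u, 0 ≤ y f e u)

end
end FVS


namespace FVS
section helpers
open SimpleGraph
variable {V : Type*}


/-- lift a walk whose support lies in `s` to the induced subgraph on `s`. -/
lemma walk_induce {G : SimpleGraph V} {s : Set V} {a b : V} (p : G.Walk a b)
    (hs : ∀ x ∈ p.support, x ∈ s) (ha : a ∈ s) (hb : b ∈ s) :
    ∃ q : (G.induce s).Walk ⟨a, ha⟩ ⟨b, hb⟩,
      q.support.map Subtype.val = p.support ∧
      q.edges.map (Sym2.map Subtype.val) = p.edges := by
  induction p with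
  | nil => exact ⟨SimpleGraph.Walk.nil, by simp, by simp⟩
  | @cons u c w h p ih =>
      have hc : c ∈ s := hs c (by simp)
      obtain ⟨q, hq1, hq2⟩ := ih (fun x hx => hs x (by simp [hx])) hc hb
      refine ⟨SimpleGraph.Walk.cons (by exact h : (G.induce s).Adj ⟨u, ha⟩ ⟨c, hc⟩) q, ?_, ?_⟩
      · exact congrArg (u :: ·) hq1
      · exact congrArg (s(u, c) :: ·) hq2

lemma cycle_induce {G : SimpleGraph V} {s : Set V} {u : V} (p : G.Walk u u)
    (hc : p.IsCycle) (hs : ∀ x ∈ p.support, x ∈ s) (hu : u ∈ s) :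
    ∃ q : (G.induce s).Walk ⟨u, hu⟩ ⟨u, hu⟩, q.IsCycle := by
  obtain ⟨q, hq1, hq2⟩ := walk_induce p hs hu hu
  refine ⟨q, ⟨⟨⟨?_⟩, ?_⟩, ?_⟩⟩
  · exact List.Nodup.of_map _ (hq2 ▸ hc.edges_nodup)
  · intro hnil
    have : p.edges = [] := by
      rw [← hq2]; subst hnil; simp
    have h3 := hc.three_le_length
    rw [← SimpleGraph.Walk.length_edges] at h3
    simp [this] at h3
  · have : q.support.tail.map Subtype.val = p.support.tail := by
      rw [← hq1]
      cases q.support <;> simp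
    exact List.Nodup.of_map _ (this ▸ hc.support_nodup)

/-- The graph `G` restricted to edges within `s`, as a graph on the same vertex type. -/
def del (G : SimpleGraph V) (s : Set V) : SimpleGraph V where
  Adj u w := G.Adj u w ∧ u ∈ s ∧ w ∈ s
  symm := ⟨fun u w h => ⟨h.1.symm, h.2.2, h.2.1⟩⟩
  loopless := ⟨fun u h => G.loopless.irrefl u h.1⟩

lemma del_le {G : SimpleGraph V} {s : Set V} : del G s ≤ G := fun _ _ h => h.1

lemma del_support_mem {G : SimpleGraph V} {s : Set V} {a b : V} (p : (del G s).Walk a b)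
    (hb : b ∈ s) : ∀ x ∈ p.support, x ∈ s := by
  induction p with
  | nil => intro x hx; simp at hx; subst hx; exact hb
  | @cons u c w h p ih =>
      intro x hx
      rw [SimpleGraph.Walk.support_cons] at hx
      rcases List.mem_cons.1 hx with rfl | hx
      · exact h.2.1
      · exact ih hb x hx

lemma del_cycle_support_mem {G : SimpleGraph V} {s : Set V} {u : V} (p : (del G s).Walk u u)
    (hc : p.IsCycle) : ∀ x ∈ p.support, x ∈ s := by
  cases p with
  | nil => exact absurd rfl hc.ne_nil
  | cons h q => exact del_support_mem _ h.2.1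

lemma del_isAcyclic {G : SimpleGraph V} {s : Set V}
    (h : (G.induce s).IsAcyclic) : (del G s).IsAcyclic := by
  intro u p hp
  have hs := del_cycle_support_mem p hp
  have hu : u ∈ s := hs u p.start_mem_support
  obtain ⟨q, hq⟩ := cycle_induce p hp hs hu
  have hle : (del G s).induce s ≤ G.induce s := fun x y hxy => hxy.1
  exact h _ (hq.mapLe hle)

lemma walk_induce' {G : SimpleGraph V} {s : Set V} {a b : V} (p : G.Walk a b)
    (hs : ∀ x ∈ p.support, x ∈ s) (ha : a ∈ s) (hb : b ∈ s) :
    (G.induce s).Reachable ⟨a, ha⟩ ⟨b, hb⟩ := by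
  obtain ⟨q, -, -⟩ := walk_induce p hs ha hb
  exact ⟨q⟩


lemma walk_support_comp {H : SimpleGraph V} {x y z : V} (w : H.Walk x y)
    (hz : z ∈ w.support) : H.Reachable x z :=
  (w.takeUntil z hz).reachable

lemma induce_isAcyclic {H : SimpleGraph V} (hac : H.IsAcyclic) (s : Set V) :
    (H.induce s).IsAcyclic := by
  intro u q hq
  have hinj : Function.Injective (fun x : s => (x : V)) := Subtype.val_injective
  let ι : H.induce s →g H := ⟨Subtype.val, fun h => h⟩
  exact hac _ ((SimpleGraph.Walk.map_isCycle_iff_of_injective (f := ι) hinj).2 hq)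

lemma comp_degree_sum [Fintype V] {H : SimpleGraph V} (hac : H.IsAcyclic)
    (C : H.ConnectedComponent) :
    (∑ u ∈ Finset.univ.filter (fun x => H.connectedComponentMk x = C), H.degree u) + 2
      = 2 * (Finset.univ.filter (fun x => H.connectedComponentMk x = C)).card := by
  set s : Set V := {x | H.connectedComponentMk x = C} with hs
  have hconn : (H.induce s).Connected := by
    rw [SimpleGraph.connected_iff]
    constructor
    · rintro ⟨x, hx⟩ ⟨y, hy⟩
      have hr : H.Reachable x y := SimpleGraph.ConnectedComponent.exact (hx.trans hy.symm)
      obtain ⟨w⟩ := hr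
      refine walk_induce' w (fun z hz => ?_) hx hy
      have := (walk_support_comp w hz).symm
      exact (SimpleGraph.ConnectedComponent.sound this).trans hx
    · obtain ⟨v, hv⟩ := C.exists_rep
      exact ⟨⟨v, hv⟩⟩
  have htree : (H.induce s).IsTree := ⟨hconn, induce_isAcyclic hac s⟩
  have hcard : (H.induce s).edgeFinset.card + 1 = Fintype.card s := htree.card_edgeFinset
  have hhs : ∑ u' : s, (H.induce s).degree u' = 2 * (H.induce s).edgeFinset.card :=
    SimpleGraph.sum_degrees_eq_twice_card_edges _
  have hdeg : ∀ u' : s, (H.induce s).degree u' = H.degree (u' : V) := by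
    intro u'
    unfold SimpleGraph.degree
    refine Finset.card_bij (fun a _ => (a : V)) ?_ ?_ ?_
    · intro a ha
      rw [SimpleGraph.mem_neighborFinset] at ha ⊢
      exact ha
    · intro a _ b _ h; exact Subtype.val_injective h
    · intro b hb
      rw [SimpleGraph.mem_neighborFinset] at hb
      have hbs : b ∈ s := by
        have h1 : H.connectedComponentMk b = H.connectedComponentMk (u' : V) :=
          (SimpleGraph.ConnectedComponent.sound hb.symm.reachable)
        have h2 : (u' : V) ∈ s := u'.2
        exact h1.trans h2
      exact ⟨⟨b, hbs⟩, by rwa [SimpleGraph.mem_neighborFinset], rfl⟩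
  have hsum : ∑ u ∈ Finset.univ.filter (fun x => H.connectedComponentMk x = C), H.degree u
      = ∑ u' : s, H.degree (u' : V) := by
    rw [Finset.sum_subtype (Finset.univ.filter (fun x => H.connectedComponentMk x = C))
      (p := fun x => x ∈ s) (fun x => by simp [hs])]
  have hc1 : 1 ≤ Fintype.card s := Fintype.card_pos_iff.2 hconn.nonempty
  have hcards : Fintype.card s = (Finset.univ.filter (fun x => H.connectedComponentMk x = C)).card := by
    rw [Fintype.card_subtype]
    congr 1
  rw [hsum]
  calc (∑ u' : s, H.degree (u' : V)) + 2
      = (∑ u' : s, (H.induce s).degree u') + 2 := by simp [hdeg]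
    _ = 2 * Fintype.card s := by rw [hhs]; omega
    _ = _ := by rw [hcards]

lemma del_walk {G : SimpleGraph V} {s : Set V} {a b : V} (p : G.Walk a b)
    (hs : ∀ x ∈ p.support, x ∈ s) : (del G s).Reachable a b := by
  induction p with
  | nil => rfl
  | @cons u c w h p ih =>
      have h1 : (del G s).Adj u c :=
        ⟨h, hs u (by simp), hs c (by simp)⟩
      exact h1.reachable.trans (ih (fun x hx => hs x (by simp [hx])))

variable [Fintype V]

lemma del_degree_zero {G : SimpleGraph V} {s : Set V} {u : V} (hu : u ∉ s) :
    (del G s).degree u = 0 := by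
  rw [SimpleGraph.degree, Finset.card_eq_zero, Finset.eq_empty_iff_forall_notMem]
  intro w hw
  rw [SimpleGraph.mem_neighborFinset] at hw
  exact hu hw.2.1

lemma del_degree_split {G : SimpleGraph V} {F : Finset V} {u : V} (hu : u ∉ F) :
    G.degree u = (del G {v | v ∉ F}).degree u
      + ((G.neighborFinset u).filter (· ∈ F)).card := by
  have : (del G {v | v ∉ F}).neighborFinset u = (G.neighborFinset u).filter (· ∉ F) := by
    ext w
    simp only [SimpleGraph.mem_neighborFinset, Finset.mem_filter]
    constructor
    · intro h; exact ⟨h.1, h.2.2⟩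
    · intro h; exact ⟨h.1, hu, h.2⟩
  rw [SimpleGraph.degree, SimpleGraph.degree, this, add_comm,
    Finset.card_filter_add_card_filter_not]

lemma loop_nodup_nil {G : SimpleGraph V} {a : V} (q : G.Walk a a)
    (hq : q.support.Nodup) : q = SimpleGraph.Walk.nil := by
  cases q with
  | nil => rfl
  | @cons _ c _ h q' =>
      exfalso
      rw [SimpleGraph.Walk.support_cons] at hq
      exact (List.nodup_cons.1 hq).1 q'.end_mem_support

lemma exists_two_neighbors {G : SimpleGraph V} {F : Finset V}
    (hFa : IsFVS G F) (hmin : ∀ F' : Finset V, F' ⊂ F → ¬ IsFVS G F')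
    {v : V} (hv : v ∈ F) :
    ∃ a b : V, a ≠ b ∧ a ∉ F ∧ b ∉ F ∧ G.Adj v a ∧ G.Adj v b ∧
      (del G {u : V | u ∉ F}).Reachable a b := by
  classical
  have hHa : (del G {u : V | u ∉ F}).IsAcyclic := del_isAcyclic hFa
  have hncyc := hmin (F.erase v) (Finset.erase_ssubset hv)
  rw [IsFVS] at hncyc
  simp only [SimpleGraph.IsAcyclic, not_forall, not_not] at hncyc
  obtain ⟨x, q, hq⟩ := hncyc
  -- map the cycle to G
  let ι : G.induce {u : V | u ∉ F.erase v} →g G := ⟨Subtype.val, fun h => h⟩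
  have hinj : Function.Injective ι := Subtype.val_injective
  let w0 := q.map ι
  have hw0 : w0.IsCycle := (SimpleGraph.Walk.map_isCycle_iff_of_injective hinj).2 hq
  have hw0s : ∀ z ∈ w0.support, z ∉ F.erase v := by
    intro z hz
    rw [SimpleGraph.Walk.support_map, List.mem_map] at hz
    obtain ⟨z', -, rfl⟩ := hz
    exact z'.2
  by_cases hvs : v ∈ w0.support
  · -- rotate so that the cycle starts at v
    let w := w0.rotate v hvs
    have hwc : w.IsCycle := hw0.rotate hvs
    have hws : ∀ z ∈ w.support, z ∉ F.erase v := by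
      intro z hz
      rw [SimpleGraph.Walk.support_eq_cons] at hz
      rcases List.mem_cons.1 hz with rfl | hz
      · exact hw0s z hvs
      · exact hw0s z (List.mem_of_mem_tail
          ((SimpleGraph.Walk.support_rotate w0 v hvs).mem_iff.1 hz))
    -- decompose w = cons h (q'.concat h')
    cases hw : w with
    | nil => exact absurd (hw ▸ hwc).ne_nil (by simp)
    | @cons _ a _ h rest =>
        have hrest : ∀ z ∈ rest.support, z ∉ F.erase v := by
          intro z hz
          exact hws z (by rw [hw, SimpleGraph.Walk.support_cons]; exact List.mem_cons_of_mem _ hz)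
        cases hrr : rest.reverse with
        | nil =>
            exfalso
            have hrnil : rest = SimpleGraph.Walk.nil := by
              rw [← rest.reverse_reverse, hrr]; rfl
            have h3 := (hw ▸ hwc).three_le_length
            rw [SimpleGraph.Walk.length_cons, hrnil, SimpleGraph.Walk.length_nil] at h3
            omega
        | @cons _ b _ h' r =>
            have hrest2 : rest = r.reverse.concat h'.symm := by
              rw [← rest.reverse_reverse, hrr, SimpleGraph.Walk.reverse_cons]
              exact (SimpleGraph.Walk.concat_eq_append _ _).symm
            set q' : G.Walk a b := r.reverse with hq'
            -- support facts
            have hwcyc := hw ▸ hwc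
            have htail : (SimpleGraph.Walk.cons h rest).support.tail.Nodup := hwcyc.support_nodup
            rw [SimpleGraph.Walk.support_cons] at htail
            simp only [List.tail_cons] at htail
            rw [hrest2, SimpleGraph.Walk.support_concat] at htail
            have htail' := List.nodup_append.1 htail
            have hnodup : q'.support.Nodup := htail'.1
            have hvq : v ∉ q'.support := fun hmem => htail'.2.2 v hmem v (by simp) rfl
            have haq : a ∈ q'.support := q'.start_mem_support
            have hbq : b ∈ q'.support := q'.end_mem_support
            have hnotF : ∀ z ∈ q'.support, z ∉ F := by
              intro z hz
              have h1 : z ∉ F.erase v := by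
                apply hrest
                rw [hrest2, SimpleGraph.Walk.support_concat]
                exact List.mem_append.2 (Or.inl hz)
              intro h2
              have hzv : z ≠ v := fun h3 => hvq (h3 ▸ hz)
              exact h1 (Finset.mem_erase.2 ⟨hzv, h2⟩)
            have hab : a ≠ b := by
              rintro rfl
              have hq'nil : q' = SimpleGraph.Walk.nil := loop_nodup_nil q' hnodup
              have h3 := hwcyc.three_le_length
              rw [SimpleGraph.Walk.length_cons, hrest2, hq'nil,
                SimpleGraph.Walk.length_concat, SimpleGraph.Walk.length_nil] at h3
              omega
            refine ⟨a, b, hab, hnotF a haq, hnotF b hbq, h, (h'.symm.symm : G.Adj v b), ?_⟩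
            exact del_walk q' (fun z hz => hnotF z hz)
  · -- the cycle avoids v entirely : contradiction with acyclicity of del
    exfalso
    have hnotF : ∀ z ∈ w0.support, z ∉ F := by
      intro z hz h2
      exact hw0s z hz (Finset.mem_erase.2 ⟨fun h3 => hvs (h3 ▸ hz), h2⟩)
    have hedges : ∀ e ∈ w0.edges, e ∈ (del G {u : V | u ∉ F}).edgeSet := by
      intro e he
      induction e using Sym2.ind with
      | _ y z =>
          rw [SimpleGraph.mem_edgeSet]
          exact ⟨w0.adj_of_mem_edges he,
            hnotF y (w0.fst_mem_support_of_mem_edges he),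
            hnotF z (w0.snd_mem_support_of_mem_edges he)⟩
    exact hHa _ (hw0.transfer hedges)

lemma mapLe_support {G H : SimpleGraph V} (hle : G ≤ H) {a b : V} (p : G.Walk a b) :
    (p.mapLe hle).support = p.support := by
  induction p with
  | nil => rfl
  | cons h p ih =>
      rw [SimpleGraph.Walk.mapLe] at ih ⊢
      rw [SimpleGraph.Walk.map_cons, SimpleGraph.Walk.support_cons,
        SimpleGraph.Walk.support_cons, ih]

lemma cutd_eq {G : SimpleGraph V} {F : Finset V} (u : V) :
    ((G.neighborFinset u).filter (· ∈ F)).card = (F.filter (fun v => G.Adj u v)).card := by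
  congr 1
  ext w
  simp only [Finset.mem_filter, SimpleGraph.mem_neighborFinset]
  tauto

section comp

variable {G : SimpleGraph V} {F : Finset V}

/-- the key per-component inequality -/
lemma comp_ineq (hdeg : ∀ v, 2 ≤ G.degree v) (hsd : ¬ HasSemiDisjointCycle G)
    (hFa : IsFVS G F) (C : (del G {u : V | u ∉ F}).ConnectedComponent)
    (hX : ¬ ∃ w ∈ F, (del G {u : V | u ∉ F}).connectedComponentMk w = C) :
    2 + (F.filter (fun v =>
        2 ≤ ((Finset.univ.filter (fun x =>
          (del G {u : V | u ∉ F}).connectedComponentMk x = C)).filter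
            (fun u => G.Adj v u)).card)).card
      ≤ ∑ u ∈ Finset.univ.filter (fun x =>
          (del G {u : V | u ∉ F}).connectedComponentMk x = C),
          (F.filter (fun v => G.Adj u v)).card := by
  classical
  set fib := Finset.univ.filter (fun x =>
    (del G {u : V | u ∉ F}).connectedComponentMk x = C) with hfib
  have hHa : (del G {u : V | u ∉ F}).IsAcyclic := del_isAcyclic hFa
  have hfibF : ∀ x ∈ fib, x ∉ F := by
    intro x hx hxF
    exact hX ⟨x, hxF, (Finset.mem_filter.1 hx).2⟩
  have hdsum := comp_degree_sum hHa C
  rw [← hfib] at hdsum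
  have hsplit : ∀ x ∈ fib, G.degree x = (del G {u : V | u ∉ F}).degree x + (F.filter (fun v => G.Adj x v)).card := by
    intro x hx
    rw [← cutd_eq]
    exact del_degree_split (hfibF x hx)
  set S := ∑ u ∈ fib, (F.filter (fun v => G.Adj u v)).card with hS
  have hdegsum : ∑ u ∈ fib, G.degree u = (∑ u ∈ fib, (del G {u : V | u ∉ F}).degree u) + S := by
    rw [hS, ← Finset.sum_add_distrib]
    exact Finset.sum_congr rfl hsplit
  have hge : 2 * fib.card ≤ ∑ u ∈ fib, G.degree u := by
    calc 2 * fib.card = ∑ _u ∈ fib, 2 := by rw [Finset.sum_const, smul_eq_mul, mul_comm]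
    _ ≤ _ := Finset.sum_le_sum (fun u _ => hdeg u)
  have hS2 : 2 ≤ S := by omega
  set k := (F.filter (fun v => 2 ≤ (fib.filter (fun u => G.Adj v u)).card)).card with hk
  -- S as a sum over F
  have hSF : S = ∑ v ∈ F, (fib.filter (fun u => G.Adj v u)).card := by
    rw [hS]
    simp only [Finset.card_filter]
    rw [Finset.sum_comm]
    refine Finset.sum_congr rfl fun v _ => Finset.sum_congr rfl fun u _ => ?_
    simp [SimpleGraph.adj_comm]
  rcases Nat.lt_or_ge k 1 with hk0 | hk1
  · omega
  rcases Nat.lt_or_ge k 2 with hk1' | hk2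
  · -- k = 1 : the hard case
    have hkone : k = 1 := by omega
    by_contra hcon
    push_neg at hcon
    have hSe : S = 2 := by omega
    -- all degrees in the component are 2
    have hall2 : ∀ u ∈ fib, G.degree u = 2 := by
      by_contra hne
      push_neg at hne
      obtain ⟨u0, hu0, hu0ne⟩ := hne
      have hlt : ∑ _u ∈ fib, 2 < ∑ u ∈ fib, G.degree u :=
        Finset.sum_lt_sum (fun u _ => hdeg u) ⟨u0, hu0, lt_of_le_of_ne (hdeg u0) (Ne.symm hu0ne)⟩
      rw [Finset.sum_const, smul_eq_mul] at hlt
      omega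
    -- get the unique v with two neighbors in fib
    obtain ⟨v, hveq⟩ := Finset.card_eq_one.1 hkone
    have hvmem : v ∈ F.filter (fun v => 2 ≤ (fib.filter (fun u => G.Adj v u)).card) := by
      rw [hveq]; exact Finset.mem_singleton_self v
    rw [Finset.mem_filter] at hvmem
    obtain ⟨hvF, hv2⟩ := hvmem
    -- in fact bC v = 2 exactly, but we only need two distinct neighbors
    obtain ⟨a, haf⟩ := Finset.card_pos.1 (by omega : 0 < (fib.filter (fun u => G.Adj v u)).card)
    obtain ⟨b, hbf, hba⟩ := Finset.exists_mem_ne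
      (s := fib.filter (fun u => G.Adj v u)) (by omega) a
    rw [Finset.mem_filter] at haf hbf
    obtain ⟨haC, hva⟩ := haf
    obtain ⟨hbC, hvb⟩ := hbf
    -- a path from a to b inside the component
    have hreach : (del G {u : V | u ∉ F}).Reachable a b :=
      SimpleGraph.ConnectedComponent.exact
        ((Finset.mem_filter.1 haC).2.trans ((Finset.mem_filter.1 hbC).2).symm)
    obtain ⟨w0⟩ := hreach
    let p := w0.toPath
    have hps : ∀ z ∈ (p : (del G {u : V | u ∉ F}).Walk a b).support, z ∈ fib := by
      intro z hz
      have : (del G {u : V | u ∉ F}).Reachable a z := walk_support_comp _ hz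
      rw [hfib, Finset.mem_filter]
      exact ⟨Finset.mem_univ z,
        (SimpleGraph.ConnectedComponent.sound this).symm.trans (Finset.mem_filter.1 haC).2⟩
    let pg := (p : (del G {u : V | u ∉ F}).Walk a b).mapLe (del_le (G := G) (s := {u : V | u ∉ F}))
    have hpgs : pg.support = (p : (del G {u : V | u ∉ F}).Walk a b).support := mapLe_support _ _
    have hpgpath : pg.IsPath := p.2.mapLe _
    have hvnp : v ∉ pg.support := by
      rw [hpgs]
      intro hmem
      exact hfibF v (hps v hmem) hvF
    -- build the cycle
    let w : G.Walk v v := SimpleGraph.Walk.cons hva (pg.concat hvb.symm)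
    have hwsupp : w.support = v :: (pg.support ++ [v]) := by
      rw [SimpleGraph.Walk.support_cons, SimpleGraph.Walk.support_concat]
    have hwedges : w.edges = s(v, a) :: (pg.edges ++ [s(b, v)]) := by
      rw [SimpleGraph.Walk.edges_cons, SimpleGraph.Walk.edges_concat,
        List.concat_eq_append]
    have hbvne : s(v, a) ≠ s(b, v) := by
      intro h
      rcases Sym2.eq_iff.1 h with ⟨h1, h2⟩ | ⟨h1, h2⟩
      · exact hfibF a haC (h2 ▸ hvF)
      · exact hba h2.symm
    have hnotedge : ∀ x y : V, x ∉ pg.support → s(x, y) ∉ pg.edges := by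
      intro x y hx he
      exact hx (pg.fst_mem_support_of_mem_edges he)
    have hwcyc : w.IsCycle := by
      constructor
      · constructor
        · rw [SimpleGraph.Walk.isTrail_def, hwedges]
          refine List.Nodup.cons ?_ ?_
          · intro hmem
            rcases List.mem_append.1 hmem with h1 | h1
            · exact hnotedge v a hvnp h1
            · rw [List.mem_singleton] at h1; exact hbvne h1
          · refine List.Nodup.append hpgpath.edges_nodup (List.nodup_singleton _) ?_
            intro e he h1
            rw [List.mem_singleton] at h1
            subst h1
            exact hvnp (pg.snd_mem_support_of_mem_edges he)
        · simp [w]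
      · rw [hwsupp]
        simp only [List.tail_cons]
        refine List.Nodup.append hpgpath.support_nodup (List.nodup_singleton _) ?_
        intro z hz h1
        rw [List.mem_singleton] at h1
        subst h1
        exact hvnp hz
    -- the cycle is semi-disjoint
    apply hsd
    refine ⟨v, w, hwcyc, ?_⟩
    have hsub : w.support.toFinset.filter (fun x => 2 < G.degree x) ⊆ {v} := by
      intro x hx
      rw [Finset.mem_filter, List.mem_toFinset, hwsupp] at hx
      obtain ⟨hmem, hdx⟩ := hx
      rw [Finset.mem_singleton]
      by_contra hxv
      have hxfib : x ∈ fib := by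
        rcases List.mem_cons.1 hmem with rfl | hmem'
        · exact absurd rfl hxv
        rcases List.mem_append.1 hmem' with h1 | h1
        · exact hps x (hpgs ▸ h1)
        · rw [List.mem_singleton] at h1; exact absurd h1 hxv
      rw [hall2 x hxfib] at hdx
      omega
    calc _ ≤ ({v} : Finset V).card := Finset.card_le_card hsub
    _ = 1 := Finset.card_singleton v
  · -- k ≥ 2
    have : 2 * k ≤ S := by
      rw [hSF]
      calc 2 * k ≤ ∑ v ∈ F.filter (fun v => 2 ≤ (fib.filter (fun u => G.Adj v u)).card),
            (fib.filter (fun u => G.Adj v u)).card := by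
            rw [hk]
            calc 2 * _ = ∑ _v ∈ F.filter (fun v => 2 ≤ (fib.filter (fun u => G.Adj v u)).card), 2 := by
                  rw [Finset.sum_const, smul_eq_mul, mul_comm]
            _ ≤ _ := Finset.sum_le_sum (fun v hv => (Finset.mem_filter.1 hv).2)
      _ ≤ _ := Finset.sum_le_sum_of_subset (Finset.filter_subset _ _)
    omega

end comp

lemma del_isolated {G : SimpleGraph V} {F : Finset V} {w z : V} (hw : w ∈ F)
    (h : (del G {u : V | u ∉ F}).Reachable w z) : w = z := by
  obtain ⟨p⟩ := h
  cases p with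
  | nil => rfl
  | cons h q => exact absurd hw h.2.1

lemma main_nat {G : SimpleGraph V} {F : Finset V}
    (hdeg : ∀ v, 2 ≤ G.degree v) (hsd : ¬ HasSemiDisjointCycle G)
    (hFa : IsFVS G F) (hmin : ∀ F' : Finset V, F' ⊂ F → ¬ IsFVS G F') :
    (∑ v ∈ F, G.degree v) + 2 * Fintype.card V ≤ 2 * G.edgeFinset.card + F.card := by
  classical
  letI : Fintype (del G {u : V | u ∉ F}).ConnectedComponent := Fintype.ofFinite _
  set mk := (del G {u : V | u ∉ F}).connectedComponentMk with hmk
  set fib := fun C => Finset.univ.filter (fun x => mk x = C) with hfibdef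
  -- handshake
  have hhs : ∑ v : V, G.degree v = 2 * G.edgeFinset.card :=
    SimpleGraph.sum_degrees_eq_twice_card_edges G
  have hsplitV : (∑ v ∈ F, G.degree v) + (∑ v ∈ Fᶜ, G.degree v) = ∑ v : V, G.degree v :=
    Finset.sum_add_sum_compl F _
  have hFc : ∀ u ∈ Fᶜ, u ∉ F := fun u hu => Finset.mem_compl.1 hu
  have hdegsplit : ∑ u ∈ Fᶜ, G.degree u
      = (∑ u ∈ Fᶜ, (del G {u : V | u ∉ F}).degree u)
        + ∑ u ∈ Fᶜ, (F.filter (fun v => G.Adj u v)).card := by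
    rw [← Finset.sum_add_distrib]
    refine Finset.sum_congr rfl fun u hu => ?_
    rw [← cutd_eq]
    exact del_degree_split (hFc u hu)
  have hdegF0 : ∑ u ∈ F, (del G {u : V | u ∉ F}).degree u = 0 := by
    refine Finset.sum_eq_zero fun u hu => del_degree_zero (by simpa using hu)
  have hBsplit : (∑ u ∈ F, (del G {u : V | u ∉ F}).degree u)
      + (∑ u ∈ Fᶜ, (del G {u : V | u ∉ F}).degree u)
      = ∑ u : V, (del G {u : V | u ∉ F}).degree u :=
    Finset.sum_add_sum_compl F _
  -- forest count summed over components
  have hfiber : ∑ C : (del G {u : V | u ∉ F}).ConnectedComponent,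
      ∑ u ∈ fib C, (del G {u : V | u ∉ F}).degree u
      = ∑ u : V, (del G {u : V | u ∉ F}).degree u :=
    Finset.sum_fiberwise_of_maps_to (fun x _ => Finset.mem_univ (mk x)) _
  have hfibercard : ∑ C : (del G {u : V | u ∉ F}).ConnectedComponent, (fib C).card
      = Fintype.card V := by
    rw [← Finset.card_univ]
    exact (Finset.card_eq_sum_card_fiberwise (fun x _ => Finset.mem_univ (mk x))).symm
  have hcomp : ∀ C, (∑ u ∈ fib C, (del G {u : V | u ∉ F}).degree u) + 2 = 2 * (fib C).card :=
    fun C => comp_degree_sum (del_isAcyclic hFa) C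
  have hforest : (∑ u : V, (del G {u : V | u ∉ F}).degree u)
      + 2 * Fintype.card (del G {u : V | u ∉ F}).ConnectedComponent
      = 2 * Fintype.card V := by
    calc (∑ u : V, (del G {u : V | u ∉ F}).degree u)
        + 2 * Fintype.card (del G {u : V | u ∉ F}).ConnectedComponent
        = ∑ C : (del G {u : V | u ∉ F}).ConnectedComponent,
            ((∑ u ∈ fib C, (del G {u : V | u ∉ F}).degree u) + 2) := by
          rw [Finset.sum_add_distrib, hfiber, Finset.sum_const, Finset.card_univ,
            smul_eq_mul, mul_comm]
      _ = ∑ C : (del G {u : V | u ∉ F}).ConnectedComponent, 2 * (fib C).card :=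
          Finset.sum_congr rfl fun C _ => hcomp C
      _ = 2 * ∑ C : (del G {u : V | u ∉ F}).ConnectedComponent, (fib C).card :=
          (Finset.mul_sum _ _ _).symm
      _ = 2 * Fintype.card V := by rw [hfibercard]
  -- the X components
  set Xc := Finset.univ.filter
    (fun C : (del G {u : V | u ∉ F}).ConnectedComponent => ¬ ∃ w ∈ F, mk w = C) with hXc
  -- counting the F components
  have hFcomp : (Finset.univ.filter
      (fun C : (del G {u : V | u ∉ F}).ConnectedComponent => ∃ w ∈ F, mk w = C)).card
      = F.card := by
    symm
    refine Finset.card_bij (fun v _ => mk v) ?_ ?_ ?_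
    · intro v hv
      exact Finset.mem_filter.2 ⟨Finset.mem_univ _, v, hv, rfl⟩
    · intro v hv v' hv' h
      exact del_isolated hv (SimpleGraph.ConnectedComponent.exact h)
    · intro C hC
      obtain ⟨-, w, hw, rfl⟩ := Finset.mem_filter.1 hC
      exact ⟨w, hw, rfl⟩
  have hcards : Xc.card + F.card
      = Fintype.card (del G {u : V | u ∉ F}).ConnectedComponent := by
    rw [← hFcomp, ← Finset.card_univ, hXc]
    rw [add_comm]
    exact Finset.card_filter_add_card_filter_not _
  -- fibers of X components avoid F
  have hfibF : ∀ C ∈ Xc, ∀ x ∈ fib C, x ∉ F := by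
    intro C hC x hx hxF
    exact (Finset.mem_filter.1 hC).2 ⟨x, hxF, (Finset.mem_filter.1 hx).2⟩
  -- total cut bound
  set T := ∑ u ∈ Fᶜ, (F.filter (fun v => G.Adj u v)).card with hT
  have hTfiber : T = ∑ C : (del G {u : V | u ∉ F}).ConnectedComponent,
      ∑ u ∈ Fᶜ.filter (fun x => mk x = C), (F.filter (fun v => G.Adj u v)).card :=
    (Finset.sum_fiberwise_of_maps_to (fun x _ => Finset.mem_univ (mk x)) _).symm
  have hXfib : ∀ C ∈ Xc, Fᶜ.filter (fun x => mk x = C) = fib C := by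
    intro C hC
    ext x
    simp only [Finset.mem_filter, Finset.mem_compl, hfibdef, Finset.mem_univ, true_and]
    exact ⟨fun h => h.2, fun h => ⟨fun hxF => hfibF C hC x
      (Finset.mem_filter.2 ⟨Finset.mem_univ _, h⟩) hxF, h⟩⟩
  have hcompineq : ∀ C ∈ Xc,
      2 + (F.filter (fun v => 2 ≤ ((fib C).filter (fun u => G.Adj v u)).card)).card
        ≤ ∑ u ∈ fib C, (F.filter (fun v => G.Adj u v)).card := by
    intro C hC
    exact comp_ineq hdeg hsd hFa C (Finset.mem_filter.1 hC).2
  have hTlow : 2 * Xc.card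
      + ∑ C ∈ Xc, (F.filter (fun v => 2 ≤ ((fib C).filter (fun u => G.Adj v u)).card)).card
      ≤ T := by
    calc 2 * Xc.card + ∑ C ∈ Xc, (F.filter
          (fun v => 2 ≤ ((fib C).filter (fun u => G.Adj v u)).card)).card
        = ∑ C ∈ Xc, (2 + (F.filter
            (fun v => 2 ≤ ((fib C).filter (fun u => G.Adj v u)).card)).card) := by
          rw [Finset.sum_add_distrib, Finset.sum_const, smul_eq_mul, mul_comm]
      _ ≤ ∑ C ∈ Xc, ∑ u ∈ fib C, (F.filter (fun v => G.Adj u v)).card :=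
          Finset.sum_le_sum hcompineq
      _ = ∑ C ∈ Xc, ∑ u ∈ Fᶜ.filter (fun x => mk x = C), (F.filter (fun v => G.Adj u v)).card :=
          Finset.sum_congr rfl fun C hC => by rw [hXfib C hC]
      _ ≤ _ := by
          rw [hTfiber]
          exact Finset.sum_le_sum_of_subset (Finset.filter_subset _ _)
  -- each v ∈ F is counted in some X component
  have hkF : F.card ≤ ∑ C ∈ Xc,
      (F.filter (fun v => 2 ≤ ((fib C).filter (fun u => G.Adj v u)).card)).card := by
    have hswap : ∑ C ∈ Xc, (F.filter
        (fun v => 2 ≤ ((fib C).filter (fun u => G.Adj v u)).card)).card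
        = ∑ v ∈ F, ∑ C ∈ Xc,
            (if 2 ≤ ((fib C).filter (fun u => G.Adj v u)).card then 1 else 0) := by
      simp only [Finset.card_filter]
      exact Finset.sum_comm
    rw [hswap]
    have : ∀ v ∈ F, 1 ≤ ∑ C ∈ Xc,
        (if 2 ≤ ((fib C).filter (fun u => G.Adj v u)).card then 1 else 0) := by
      intro v hv
      obtain ⟨a, b, hab, haF, hbF, hva, hvb, hreach⟩ := exists_two_neighbors hFa hmin hv
      have hCX : mk a ∈ Xc := by
        rw [hXc, Finset.mem_filter]
        refine ⟨Finset.mem_univ _, ?_⟩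
        rintro ⟨w, hwF, hweq⟩
        exact haF (del_isolated hwF (SimpleGraph.ConnectedComponent.exact hweq) ▸ hwF)
      have hpair : ({a, b} : Finset V) ⊆ (fib (mk a)).filter (fun u => G.Adj v u) := by
        intro x hx
        rcases Finset.mem_insert.1 hx with rfl | hx
        · exact Finset.mem_filter.2 ⟨Finset.mem_filter.2 ⟨Finset.mem_univ _, rfl⟩, hva⟩
        · rw [Finset.mem_singleton] at hx
          subst hx
          exact Finset.mem_filter.2 ⟨Finset.mem_filter.2
            ⟨Finset.mem_univ _, (SimpleGraph.ConnectedComponent.sound hreach).symm⟩, hvb⟩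
      have h2le : 2 ≤ ((fib (mk a)).filter (fun u => G.Adj v u)).card := by
        calc 2 = ({a, b} : Finset V).card := (Finset.card_pair hab).symm
        _ ≤ _ := Finset.card_le_card hpair
      calc 1 = (if 2 ≤ ((fib (mk a)).filter (fun u => G.Adj v u)).card then 1 else 0) := by
            rw [if_pos h2le]
        _ ≤ _ := Finset.single_le_sum
              (f := fun C => if 2 ≤ ((fib C).filter (fun u => G.Adj v u)).card then 1 else 0)
              (fun C _ => Nat.zero_le _) hCX
    calc F.card = ∑ _v ∈ F, 1 := by rw [Finset.sum_const, smul_eq_mul, mul_one]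
    _ ≤ _ := Finset.sum_le_sum this
  omega

end helpers
end FVS

namespace FVS

/-- if `G` has minimum degree at least `2` and no semi-disjoint cycles,
then every inclusion-wise minimal feedback vertex set `F` satisfies
`Σ_{v ∈ F} (d(v) - 1) ≤ 2 (|E| - |V|)`. -/
theorem stmt_5 {V : Type*} [Fintype V] (G : SimpleGraph V)
    (hdeg : ∀ v, 2 ≤ G.degree v) (hsd : ¬ HasSemiDisjointCycle G)
    (F : Finset V) (hF : IsFVS G F)
    (hmin : ∀ F' : Finset V, F' ⊂ F → ¬ IsFVS G F') :
    ∑ v ∈ F, ((G.degree v : ℝ) - 1) ≤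
      2 * ((G.edgeFinset.card : ℝ) - (Fintype.card V : ℝ)) := by
  classical
  have hnat := main_nat hdeg hsd hF hmin
  have hcast := (Nat.cast_le (α := ℝ)).2 hnat
  push_cast at hcast
  rw [Finset.sum_sub_distrib, Finset.sum_const, nsmul_eq_mul, mul_one]
  linarith


end FVS
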